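/- For integers q with 1 ≤ q ≤ n and an n-simplex x, Δ_{n-q}(∂x) = Σ_{U ∈ P_q(n)} ( Σ_{u ∈ U^1} d_{u.U^0}(x) ⊗ d_{U^1}(x) + Σ_{u ∈ U^0} d_{U^0}(x) ⊗ d_{u.U^1}(x) ) over 𝔽₂. -/

import Mathlib

open scoped TensorProduct

def posIn (S : Finset ℕ) (u : ℕ) : ℕ := (S.filter (fun v => v ≤ u)).card
def idxFun (U : Finset ℕ) (u : ℕ) : ℕ := (u + posIn U u) % 2
def part0 (U : Finset ℕ) : Finset ℕ := U.filter (fun u => idxFun U u = 0)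
def part1 (U : Finset ℕ) : Finset ℕ := U.filter (fun u => idxFun U u = 1)

variable {V : Type} [LinearOrder V]

/-- `dFace U x` deletes from the simplex `x` the vertices in (0-based) positions `U`. -/
def dFace (U : Finset ℕ) (x : Finset V) : Finset V :=
  ((((x.sort (· ≤ ·)).zipIdx.map Prod.swap).filter (fun p => decide (p.1 ∉ U))).map Prod.snd).toFinset

/-- Mod 2 simplicial chains: the free `𝔽₂`-module on simplices (finite subsets of `V`). -/
abbrev Chains (V : Type) [LinearOrder V] := Finset V →₀ ZMod 2


noncomputable instance {V : Type} [LinearOrder V] :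
    Zero (TensorProduct (ZMod 2) (Chains V) (Chains V)) :=
  (inferInstance : AddCommMonoid (TensorProduct (ZMod 2) (Chains V) (Chains V))).toAddMonoid.toZero

/-- Basis chain corresponding to a simplex. -/
noncomputable def eC (x : Finset V) : Chains V := Finsupp.single x 1

/-- The cup-`i` coproduct on a basis simplex. -/
noncomputable def deltaSimplex (i : ℤ) (x : Finset V) :
    TensorProduct (ZMod 2) (Chains V) (Chains V) :=
  if 0 ≤ i ∧ i ≤ (x.card : ℤ) - 1 then
    ∑ U ∈ Finset.powersetCard (x.card - 1 - i.toNat) (Finset.range x.card),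
      eC (dFace (part0 U) x) ⊗ₜ[ZMod 2] eC (dFace (part1 U) x)
  else (0 : TensorProduct (ZMod 2) (Chains V) (Chains V))

/-- The cup-`i` coproduct `Δᵢ`, as a linear map on chains. -/
noncomputable def deltaMap (V : Type) [LinearOrder V] (i : ℤ) :
    Chains V →ₗ[ZMod 2] TensorProduct (ZMod 2) (Chains V) (Chains V) :=
  Finsupp.lift _ (ZMod 2) (Finset V) (deltaSimplex i)

/-- Mod 2 boundary of a basis simplex. -/
noncomputable def bdSimplex (x : Finset V) : Chains V :=
  if 2 ≤ x.card then ∑ i ∈ Finset.range x.card, eC (dFace {i} x) else 0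

/-- Mod 2 simplicial boundary `∂ = Σ dᵢ`. -/
noncomputable def bdMap (V : Type) [LinearOrder V] : Chains V →ₗ[ZMod 2] Chains V :=
  Finsupp.lift _ (ZMod 2) (Finset V) bdSimplex

/-- Boundary on the tensor product: `∂(a⊗b) = ∂a⊗b + a⊗∂b` (signs trivial mod 2). -/
noncomputable def bdT (V : Type) [LinearOrder V] :
    TensorProduct (ZMod 2) (Chains V) (Chains V) →ₗ[ZMod 2]
      TensorProduct (ZMod 2) (Chains V) (Chains V) :=
  TensorProduct.map (bdMap V) LinearMap.id + TensorProduct.map LinearMap.id (bdMap V)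

/-- Transposition of tensor factors `T(a⊗b) = b⊗a`. -/
noncomputable def transp (V : Type) [LinearOrder V] :
    TensorProduct (ZMod 2) (Chains V) (Chains V) →ₗ[ZMod 2]
      TensorProduct (ZMod 2) (Chains V) (Chains V) :=
  (TensorProduct.comm (ZMod 2) (Chains V) (Chains V)).toLinearMap

/-- Chain map induced by a simplicial (monotone) map `f`. -/
noncomputable def fChain {W : Type} [LinearOrder W] (f : V → W) :
    Chains V →ₗ[ZMod 2] Chains W :=
  Finsupp.lift _ (ZMod 2) (Finset V)
    (fun x => if (x.image f).card = x.card then eC (x.image f) else 0)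

/-- Evaluation of a cochain on chains. -/
noncomputable def evalCochain (α : Finset V → ZMod 2) : Chains V →ₗ[ZMod 2] ZMod 2 :=
  Finsupp.lift _ (ZMod 2) (Finset V) α

/-- Evaluation of a tensor of cochains on a tensor of chains. -/
noncomputable def pairing (α β : Finset V → ZMod 2) :
    TensorProduct (ZMod 2) (Chains V) (Chains V) →ₗ[ZMod 2] ZMod 2 :=
  (LinearMap.mul' (ZMod 2) (ZMod 2)) ∘ₗ TensorProduct.map (evalCochain α) (evalCochain β)

/-- Indicator cochain of a single simplex. -/
def indC (a : Finset V) : Finset V → ZMod 2 := fun y => if y = a then 1 else 0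

def rk (x : Finset V) (v : V) : ℕ := (x.filter (· < v)).card

lemma sorted_filter_lt (l : List V) (h : l.Pairwise (· < ·)) (k : ℕ) (hk : k < l.length)
    (v : V) (hv : l[k] = v) :
    l.filter (fun w => w < v) = l.take k := by
  conv_lhs => rw [← List.take_append_drop k l]
  rw [List.filter_append]
  have h1 : (l.take k).filter (fun w => w < v) = l.take k := by
    apply List.filter_eq_self.mpr
    intro a ha
    rw [List.mem_iff_getElem] at ha
    obtain ⟨i, hi, rfl⟩ := ha
    have hi' : i < k := by simp at hi; omega
    simp only [List.getElem_take]
    subst hv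
    exact decide_eq_true (h.rel_get_of_lt (by simpa using hi'))
  have h2 : (l.drop k).filter (fun w => w < v) = [] := by
    apply List.filter_eq_nil_iff.mpr
    intro a ha
    rw [List.mem_iff_getElem] at ha
    obtain ⟨i, hi, rfl⟩ := ha
    simp only [List.getElem_drop]
    simp only [decide_eq_true_eq, not_lt]
    subst hv
    rcases Nat.eq_zero_or_pos i with rfl | hpos
    · simp
    · exact le_of_lt (h.rel_get_of_lt (by simp; omega))
  rw [h1, h2, List.append_nil]

lemma rk_sort_getElem (x : Finset V) (k : ℕ) (hk : k < (x.sort (· ≤ ·)).length) :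
    rk x ((x.sort (· ≤ ·))[k]) = k := by
  set l := x.sort (· ≤ ·) with hl
  have hs : l.Pairwise (· < ·) := x.sortedLT_sort.pairwise
  have hnd : l.Nodup := x.sort_nodup (· ≤ ·)
  have hx : x = l.toFinset := (Finset.sort_toFinset _ _).symm
  have : x.filter (· < l[k]) = (l.filter (fun w => w < l[k])).toFinset := by
    rw [List.toFinset_filter, ← hx]; simp
  rw [rk, this, sorted_filter_lt l hs k hk _ rfl,
    List.toFinset_card_of_nodup (hnd.sublist (List.take_sublist _ _)), List.length_take]
  omega

lemma mem_zipIdx_swap (l : List V) (p : ℕ × V) :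
    p ∈ l.zipIdx.map Prod.swap ↔ l[p.1]? = some p.2 := by
  rw [List.mem_map]; constructor
  · rintro ⟨⟨a, i⟩, h, rfl⟩; simpa using List.mem_zipIdx_iff_getElem?.mp h
  · intro h; exact ⟨p.swap, List.mem_zipIdx_iff_getElem?.mpr (by simpa using h), by simp⟩

lemma mem_dFace {U : Finset ℕ} {x : Finset V} {v : V} :
    v ∈ dFace U x ↔ v ∈ x ∧ rk x v ∉ U := by
  set l := x.sort (· ≤ ·) with hl
  simp only [dFace, List.mem_toFinset, List.mem_map, List.mem_filter,
    ↓mem_zipIdx_swap, decide_eq_true_eq]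
  constructor
  · rintro ⟨⟨k, w⟩, ⟨hget, hU⟩, rfl⟩
    simp only at hget hU ⊢
    have hk : k < l.length := by
      by_contra hc
      rw [List.getElem?_eq_none (by simp only [← hl]; omega)] at hget
      simp at hget
    rw [List.getElem?_eq_getElem hk] at hget
    obtain rfl : l[k] = w := by simpa using hget
    refine ⟨?_, ?_⟩
    · rw [← Finset.mem_sort (· ≤ ·)]
      exact List.getElem_mem hk
    · rwa [rk_sort_getElem x k hk]
  · rintro ⟨hvx, hU⟩
    have : v ∈ l := by rw [hl, Finset.mem_sort]; exact hvx
    rw [List.mem_iff_getElem] at this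
    obtain ⟨k, hk, rfl⟩ := this
    refine ⟨(k, l[k]), ⟨?_, ?_⟩, rfl⟩
    · exact List.getElem?_eq_getElem hk
    · exact fun hc => hU (by rw [show rk x l[k] = k from rk_sort_getElem x k hk]; exact hc)

lemma dFace_eq_filter (U : Finset ℕ) (x : Finset V) :
    dFace U x = x.filter (fun v => rk x v ∉ U) := by
  ext v; simp [mem_dFace, Finset.mem_filter]

lemma rk_lt_card {x : Finset V} {v : V} (hv : v ∈ x) : rk x v < x.card := by
  apply Finset.card_lt_card
  constructor
  · exact Finset.filter_subset _ _
  · intro hsub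
    have := hsub hv
    simp at this

lemma rk_lt_rk {x : Finset V} {v w : V} (hv : v ∈ x) (hvw : v < w) : rk x v < rk x w := by
  apply Finset.card_lt_card
  constructor
  · intro a ha
    simp only [Finset.mem_filter] at ha ⊢
    exact ⟨ha.1, ha.2.trans hvw⟩
  · intro hsub
    have := hsub (by simp [Finset.mem_filter, hvw, hv] : v ∈ x.filter (· < w))
    simp at this

lemma rk_lt_iff {x : Finset V} {v w : V} (hv : v ∈ x) (hw : w ∈ x) :
    rk x v < rk x w ↔ v < w := by
  constructor
  · intro h
    by_contra hc
    push_neg at hc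
    rcases lt_or_eq_of_le hc with h2 | rfl
    · exact absurd (rk_lt_rk hw h2) (by omega)
    · omega
  · exact rk_lt_rk hv

lemma rk_inj {x : Finset V} {v w : V} (hv : v ∈ x) (hw : w ∈ x) (h : rk x v = rk x w) :
    v = w := by
  rcases lt_trichotomy v w with h2 | h2 | h2
  · exact absurd (rk_lt_rk hv h2) (by omega)
  · exact h2
  · exact absurd (rk_lt_rk hw h2) (by omega)

lemma exists_rk {x : Finset V} {k : ℕ} (hk : k < x.card) : ∃ v ∈ x, rk x v = k := by
  have hk' : k < (x.sort (· ≤ ·)).length := by rwa [Finset.length_sort]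
  exact ⟨(x.sort (· ≤ ·))[k], by rw [← Finset.mem_sort (· ≤ ·)]; exact List.getElem_mem hk',
    rk_sort_getElem x k hk'⟩

lemma card_dFace_singleton {x : Finset V} {i : ℕ} (hi : i < x.card) :
    (dFace {i} x).card = x.card - 1 := by
  rw [dFace_eq_filter]
  obtain ⟨v, hv, hrv⟩ := exists_rk hi
  have : x.filter (fun w => rk x w ∉ ({i} : Finset ℕ)) = x.erase v := by
    ext w
    simp only [Finset.mem_filter, Finset.mem_erase, Finset.mem_singleton]
    constructor
    · rintro ⟨hw, hne⟩
      exact ⟨fun hc => hne (by rw [hc, hrv]), hw⟩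
    · rintro ⟨hne, hw⟩
      exact ⟨hw, fun hc => hne (rk_inj hw hv (by rw [hc, hrv]))⟩
  rw [this, Finset.card_erase_of_mem hv]

/-- vertex-shift map -/
def sh (i j : ℕ) : ℕ := if j < i then j else j + 1

lemma rk_dFace_singleton {x : Finset V} {i : ℕ} (hi : i < x.card) {v : V} (hv : v ∈ x)
    (hne : rk x v ≠ i) :
    sh i (rk (dFace {i} x) v) = rk x v := by
  obtain ⟨u, hu, hru⟩ := exists_rk hi
  have hyf : dFace {i} x = x.erase u := by
    rw [dFace_eq_filter]; ext w
    simp only [Finset.mem_filter, Finset.mem_erase, Finset.mem_singleton]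
    constructor
    · rintro ⟨hw, h2⟩; exact ⟨fun hc => h2 (by rw [hc, hru]), hw⟩
    · rintro ⟨h2, hw⟩; exact ⟨hw, fun hc => h2 (rk_inj hw hu (by rw [hc, hru]))⟩
  have key : rk (x.erase u) v = if rk x v < i then rk x v else rk x v - 1 := by
    rw [rk]
    have : (x.erase u).filter (· < v) = if u < v then (x.filter (· < v)).erase u
        else x.filter (· < v) := by
      split_ifs with h
      · ext w; simp only [Finset.mem_filter, Finset.mem_erase]; tauto
      · ext w; simp only [Finset.mem_filter, Finset.mem_erase]
        constructor
        · rintro ⟨⟨_, hw⟩, hlt⟩; exact ⟨hw, hlt⟩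
        · rintro ⟨hw, hlt⟩
          refine ⟨⟨fun hc => ?_, hw⟩, hlt⟩
          subst hc; exact h hlt
    rw [this]
    have hrkiff : u < v ↔ i < rk x v := by
      rw [← hru]; exact ⟨fun h => rk_lt_rk hu h, fun h => by
        rcases lt_trichotomy u v with h2 | rfl | h2
        · exact h2
        · omega
        · exact absurd (rk_lt_rk hv h2) (by rw [hru]; omega)⟩
    by_cases h : u < v
    · have h2 : i < rk x v := hrkiff.mp h
      rw [if_pos h, Finset.card_erase_of_mem (by simp only [Finset.mem_filter]; exact ⟨hu, h⟩),
        if_neg (by omega)]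
      rfl
    · have h2 : ¬ i < rk x v := fun hc => h (hrkiff.mpr hc)
      rw [if_neg h, if_pos (by omega)]
      rfl
  rw [hyf, key, sh]
  have : i ≠ rk x v := fun h => hne h.symm
  split_ifs with h1 h2 h2 <;> omega

lemma sh_strictMono (i : ℕ) : StrictMono (sh i) := by
  intro a b hab
  simp only [sh]
  split_ifs <;> omega

lemma sh_ne (i j : ℕ) : sh i j ≠ i := by simp only [sh]; split_ifs <;> omega

lemma sh_le_iff {i a b : ℕ} : sh i a ≤ sh i b ↔ a ≤ b := by
  simp only [sh]; split_ifs <;> omega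

lemma le_sh_iff {i j : ℕ} : i ≤ sh i j ↔ i ≤ j := by
  simp only [sh]; split_ifs <;> omega

lemma dFace_comp {x : Finset V} {i : ℕ} (hi : i < x.card) (S : Finset ℕ) :
    dFace S (dFace {i} x) = dFace (insert i (S.image (sh i))) x := by
  set y := dFace {i} x with hy
  ext v
  rw [mem_dFace, mem_dFace, hy, mem_dFace]
  simp only [Finset.mem_singleton, Finset.mem_insert, Finset.mem_image]
  constructor
  · rintro ⟨⟨hvx, hne⟩, hS⟩
    refine ⟨hvx, ?_⟩
    push_neg
    refine ⟨hne, fun j hj hc => ?_⟩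
    rw [← rk_dFace_singleton hi hvx hne] at hc
    exact hS (by rwa [(sh_strictMono i).injective hc] at hj)
  · rintro ⟨hvx, hni⟩
    push_neg at hni
    obtain ⟨hne, hn2⟩ := hni
    refine ⟨⟨hvx, hne⟩, fun hc => ?_⟩
    exact hn2 _ hc (rk_dFace_singleton hi hvx hne)

-- parity lemmas (pure ℕ)
lemma posIn_shift (U' : Finset ℕ) (i j : ℕ) :
    posIn (insert i (U'.image (sh i))) (sh i j) =
      posIn U' j + (if i ≤ j then 1 else 0) := by
  unfold posIn
  rw [Finset.filter_insert]
  have himg : (U'.image (sh i)).filter (· ≤ sh i j)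
      = (U'.filter (· ≤ j)).image (sh i) := by
    rw [Finset.filter_image]
    congr 1
    ext a
    simp [sh_le_iff]
  have hnotmem : i ∉ (U'.image (sh i)).filter (· ≤ sh i j) := by
    simp only [Finset.mem_filter]
    rintro ⟨hmem, -⟩
    obtain ⟨a, -, ha⟩ := Finset.mem_image.mp hmem
    exact sh_ne i a ha
  split_ifs with h1 h2 h2
  · rw [Finset.card_insert_of_notMem hnotmem, himg,
      Finset.card_image_of_injective _ (sh_strictMono i).injective]
  · exact absurd (le_sh_iff.mp h1) h2
  · exact absurd (le_sh_iff.mpr h2) h1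
  · rw [himg, Finset.card_image_of_injective _ (sh_strictMono i).injective]
    omega

lemma idxFun_shift (U' : Finset ℕ) (i j : ℕ) :
    idxFun (insert i (U'.image (sh i))) (sh i j) = idxFun U' j := by
  unfold idxFun
  rw [posIn_shift]
  simp only [sh]
  split_ifs <;> omega

lemma part_shift (U' : Finset ℕ) (i : ℕ) (b : ℕ)
    (pb : Finset ℕ → Finset ℕ)
    (hpb : ∀ W, pb W = W.filter (fun u => idxFun W u = b)) :
    pb (insert i (U'.image (sh i))) =
      (if idxFun (insert i (U'.image (sh i))) i = b
        then insert i ((pb U').image (sh i)) else (pb U').image (sh i)) := by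
  rw [hpb, hpb, Finset.filter_insert]
  have : (U'.image (sh i)).filter (fun u => idxFun (insert i (U'.image (sh i))) u = b)
      = (U'.filter (fun u => idxFun U' u = b)).image (sh i) := by
    rw [Finset.filter_image]
    apply congrArg
    apply Finset.filter_congr
    intro j hj
    rw [idxFun_shift]
  rw [this]

def tau (u j : ℕ) : ℕ := if j < u then j else j - 1

lemma tau_sh (i j : ℕ) : tau i (sh i j) = j := by
  simp only [tau, sh]; split_ifs <;> omega

lemma sh_tau {u j : ℕ} (h : j ≠ u) : sh u (tau u j) = j := by
  simp only [tau, sh]; split_ifs <;> omega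

lemma lift_eC {M : Type} [AddCommMonoid M] [Module (ZMod 2) M] (g : Finset V → M)
    (a : Finset V) :
    Finsupp.lift M (ZMod 2) (Finset V) g (eC a) = g a := by
  rw [eC, Finsupp.lift_apply, Finsupp.sum_single_index (by simp), one_smul]

noncomputable def gTerm (x : Finset V) (U : Finset ℕ) (u : ℕ) :
    TensorProduct (ZMod 2) (Chains V) (Chains V) :=
  if idxFun U u = 1 then eC (dFace (insert u (part0 U)) x) ⊗ₜ[ZMod 2] eC (dFace (part1 U) x)
  else eC (dFace (part0 U) x) ⊗ₜ[ZMod 2] eC (dFace (insert u (part1 U)) x)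

lemma idx_dichotomy (U : Finset ℕ) (u : ℕ) : idxFun U u = 0 ∨ idxFun U u = 1 := by
  unfold idxFun; omega

lemma part0_eq (U : Finset ℕ) : part0 U = U.filter (fun u => idxFun U u = 0) := rfl
lemma part1_eq (U : Finset ℕ) : part1 U = U.filter (fun u => idxFun U u = 1) := rfl

/-- for `1 ≤ q ≤ n` and an `n`-simplex `x`,
`Δ_{n-q}(∂x) = Σ_{U ∈ P_q(n)} ( Σ_{u ∈ U^1} d_{u.U^0}(x) ⊗ d_{U^1}(x)
  + Σ_{u ∈ U^0} d_{U^0}(x) ⊗ d_{u.U^1}(x) )` over `𝔽₂`. -/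
theorem stmt_12 {V : Type} [LinearOrder V] (n q : ℕ) (hq1 : 1 ≤ q) (hq2 : q ≤ n)
    (x : Finset V) (hx : x.card = n + 1) :
    deltaMap V ((n : ℤ) - q) (bdMap V (eC x)) =
      ∑ U ∈ Finset.powersetCard q (Finset.range (n + 1)),
        ((∑ u ∈ part1 U,
            eC (dFace (insert u (part0 U)) x) ⊗ₜ[ZMod 2] eC (dFace (part1 U) x)) +
         (∑ u ∈ part0 U,
            eC (dFace (part0 U) x) ⊗ₜ[ZMod 2] eC (dFace (insert u (part1 U)) x))) := by
  classical
  have hn1 : 1 ≤ n := hq1.trans hq2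
  -- Step 1 : expand the boundary
  have h1 : bdMap V (eC x) = ∑ i ∈ Finset.range (n + 1), eC (dFace {i} x) := by
    unfold bdMap
    rw [lift_eC]
    unfold bdSimplex
    rw [if_pos (by omega), hx]
  rw [h1, map_sum]
  -- Step 2 : expand Δ on each face
  have h2 : ∀ i ∈ Finset.range (n + 1),
      deltaMap V ((n : ℤ) - q) (eC (dFace {i} x)) =
      ∑ U' ∈ Finset.powersetCard (q - 1) (Finset.range n),
        eC (dFace (insert i ((part0 U').image (sh i))) x) ⊗ₜ[ZMod 2]
          eC (dFace (insert i ((part1 U').image (sh i))) x) := by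
    intro i hi
    rw [Finset.mem_range] at hi
    have hi' : i < x.card := by omega
    have hcard : (dFace {i} x).card = n := by
      rw [card_dFace_singleton hi', hx]
      omega
    unfold deltaMap
    rw [lift_eC]
    unfold deltaSimplex
    rw [hcard, if_pos (by constructor <;> push_cast <;> omega)]
    have htn : ((n : ℤ) - q).toNat = n - q := by omega
    rw [htn, show n - 1 - (n - q) = q - 1 by omega]
    refine Finset.sum_congr rfl fun U' _ => ?_
    rw [dFace_comp hi', dFace_comp hi']
  rw [Finset.sum_congr rfl h2]
  -- Step 3 : rewrite each RHS summand as a single sum over U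
  have h3 : ∀ U ∈ Finset.powersetCard q (Finset.range (n + 1)),
      ((∑ u ∈ part1 U,
          eC (dFace (insert u (part0 U)) x) ⊗ₜ[ZMod 2] eC (dFace (part1 U) x)) +
       (∑ u ∈ part0 U,
          eC (dFace (part0 U) x) ⊗ₜ[ZMod 2] eC (dFace (insert u (part1 U)) x))) =
      ∑ u ∈ U, gTerm x U u := by
    intro U _
    unfold gTerm
    rw [Finset.sum_ite]
    have hf0 : U.filter (fun u => ¬ idxFun U u = 1) = part0 U := by
      rw [part0_eq]
      refine Finset.filter_congr fun u _ => ?_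
      rcases idx_dichotomy U u with h | h <;> simp [h]
    rw [hf0, ← part1_eq]
  rw [Finset.sum_congr rfl h3]
  -- Step 4 : the bijection
  rw [← Finset.sum_product', ← Finset.sum_sigma
    (Finset.powersetCard q (Finset.range (n + 1))) (fun U => U) (fun p => gTerm x p.1 p.2)]
  refine Finset.sum_nbij'
    (fun p => (⟨insert p.1 (p.2.image (sh p.1)), p.1⟩ : (_ : Finset ℕ) × ℕ))
    (fun σ => (σ.2, (σ.1.erase σ.2).image (tau σ.2))) ?_ ?_ ?_ ?_ ?_
  · -- forward membership
    rintro ⟨i, U'⟩ hp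
    dsimp only at hp ⊢
    rw [Finset.mem_product, Finset.mem_range, Finset.mem_powersetCard] at hp
    obtain ⟨hi, hU'sub, hU'card⟩ := hp
    rw [Finset.mem_sigma, Finset.mem_powersetCard]
    refine ⟨⟨?_, ?_⟩, Finset.mem_insert_self _ _⟩
    · intro a ha
      rcases Finset.mem_insert.mp ha with rfl | ha
      · exact Finset.mem_range.mpr hi
      · obtain ⟨j, hj, rfl⟩ := Finset.mem_image.mp ha
        have := Finset.mem_range.mp (hU'sub hj)
        rw [Finset.mem_range, sh]
        split_ifs <;> omega
    · rw [Finset.card_insert_of_notMem (fun hc => by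
          obtain ⟨j, -, hj⟩ := Finset.mem_image.mp hc
          exact sh_ne i j hj),
        Finset.card_image_of_injective _ (sh_strictMono i).injective, hU'card]
      omega
  · -- backward membership
    rintro ⟨U, u⟩ hσ
    dsimp only at hσ ⊢
    rw [Finset.mem_sigma, Finset.mem_powersetCard] at hσ
    obtain ⟨⟨hUsub, hUcard⟩, hu⟩ := hσ
    have hun : u < n + 1 := Finset.mem_range.mp (hUsub hu)
    rw [Finset.mem_product, Finset.mem_range, Finset.mem_powersetCard]
    refine ⟨hun, ?_, ?_⟩
    · intro a ha
      obtain ⟨b, hb, rfl⟩ := Finset.mem_image.mp ha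
      obtain ⟨hbu, hbU⟩ := Finset.mem_erase.mp hb
      have := Finset.mem_range.mp (hUsub hbU)
      rw [Finset.mem_range, tau]
      split_ifs <;> omega
    · rw [Finset.card_image_of_injOn, Finset.card_erase_of_mem hu, hUcard]
      intro a ha b hb hab
      obtain ⟨hau, -⟩ := Finset.mem_erase.mp ha
      obtain ⟨hbu, -⟩ := Finset.mem_erase.mp hb
      simp only [tau] at hab
      split_ifs at hab <;> omega
  · -- left inverse
    rintro ⟨i, U'⟩ -
    dsimp only
    have h1 : (insert i (U'.image (sh i))).erase i = U'.image (sh i) :=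
      Finset.erase_insert (fun hc => by
        obtain ⟨j, -, hj⟩ := Finset.mem_image.mp hc
        exact sh_ne i j hj)
    simp only [h1, Finset.image_image]
    refine Prod.ext rfl ?_
    simp only
    rw [show (tau i ∘ sh i) = id from funext (tau_sh i), Finset.image_id]
  · -- right inverse
    rintro ⟨U, u⟩ hσ
    dsimp only at hσ ⊢
    rw [Finset.mem_sigma] at hσ
    obtain ⟨-, hu⟩ := hσ
    simp only [Finset.image_image]
    have h1 : (U.erase u).image (sh u ∘ tau u) = U.erase u := by
      refine Eq.trans (Finset.image_congr (g := id) ?_) Finset.image_id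
      intro a ha
      simp only [Finset.mem_coe] at ha
      exact sh_tau (Finset.mem_erase.mp ha).1
    rw [h1, Finset.insert_erase hu]
  · -- terms agree
    rintro ⟨i, U'⟩ -
    dsimp only
    have hp0 := part_shift U' i 0 part0 part0_eq
    have hp1 := part_shift U' i 1 part1 part1_eq
    rcases idx_dichotomy (insert i (U'.image (sh i))) i with h | h
    · unfold gTerm
      rw [if_neg (by omega), hp0, if_pos h, hp1, if_neg (by omega)]
    · unfold gTerm
      rw [if_pos h, hp0, if_neg (by omega), hp1, if_pos h]
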